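/- arXiv:math/0106214 — 3 statements merged into one kernel-verified Lean document; each statement's English description precedes it below -/
import Mathlib

section
/- Let t ∈ ℂ with t ≠ 0 and t + t⁻¹ ≠ 0. Let e be the endomorphism of ℂ² ⊗ ℂ² defined by e(v₁⊗v₁) = 0, e(v₂⊗v₂) = 0, e(v₁⊗v₂) = (t+t⁻¹)⁻¹(t·v₁⊗v₂ − v₂⊗v₁), e(v₂⊗v₁) = (t+t⁻¹)⁻¹(−v₁⊗v₂ + t⁻¹·v₂⊗v₁), set q = t², g = q·id − (1+q)e on ℂ² ⊗ ℂ², and on (ℂ²)^{⊗3} set g₁ = g ⊗ id, g₂ = id ⊗ g, and T = g₂ ∘ g₁. Then for every v ∈ ℂ², T(v ⊗ w) = t³ · (w ⊗ v), where w = v₁⊗v₂ − t⁻¹·v₂⊗v₁. (In particular the Kazhdan–Wenzl invariant r satisfies r = t³ and r² = q³, correcting the claim r² = 1 of Kazhdan–Wenzl for N = 2.) -/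
/-- The standard basis vectors of `ℂ²`. -/
noncomputable def v (i : Fin 2) : Fin 2 → ℂ := Pi.single i 1

/-- The tensor product of two vectors of `ℂ²`, realized in `ℂ² ⊗ ℂ² ≅ ℂ^{2×2}`. -/
noncomputable def tp (u w : Fin 2 → ℂ) : Fin 2 × Fin 2 → ℂ := fun p => u p.1 * w p.2

/-- `f ⊗ id` : the endomorphism of `(ℂ²)^{⊗3}` acting by `f` on the first two factors. -/
noncomputable def amp12 (f : Matrix (Fin 2 × Fin 2) (Fin 2 × Fin 2) ℂ) :
    Matrix (Fin 2 × Fin 2 × Fin 2) (Fin 2 × Fin 2 × Fin 2) ℂ :=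
  Matrix.of fun p q => f (p.1, p.2.1) (q.1, q.2.1) * (if p.2.2 = q.2.2 then 1 else 0)

/-- `id ⊗ f` : the endomorphism of `(ℂ²)^{⊗3}` acting by `f` on the last two factors. -/
noncomputable def amp23 (f : Matrix (Fin 2 × Fin 2) (Fin 2 × Fin 2) ℂ) :
    Matrix (Fin 2 × Fin 2 × Fin 2) (Fin 2 × Fin 2 × Fin 2) ℂ :=
  Matrix.of fun p q => (if p.1 = q.1 then 1 else 0) * f (p.2.1, p.2.2) (q.2.1, q.2.2)

/-- `u ⊗ w` for `u ∈ ℂ²` and `w ∈ ℂ² ⊗ ℂ²`, as a vector of `(ℂ²)^{⊗3}`. -/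
noncomputable def vtp (u : Fin 2 → ℂ) (w : Fin 2 × Fin 2 → ℂ) :
    Fin 2 × Fin 2 × Fin 2 → ℂ := fun p => u p.1 * w p.2

/-- `w ⊗ u` for `w ∈ ℂ² ⊗ ℂ²` and `u ∈ ℂ²`, as a vector of `(ℂ²)^{⊗3}`. -/
noncomputable def tpv (w : Fin 2 × Fin 2 → ℂ) (u : Fin 2 → ℂ) :
    Fin 2 × Fin 2 × Fin 2 → ℂ := fun p => w (p.1, p.2.1) * u p.2.2

set_option maxHeartbeats 2000000 in
/-- With `g = q·id − (1+q)e`, `q = t²`, `g₁ = g ⊗ id`, `g₂ = id ⊗ g` and `T = g₂g₁`,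
one has `T(v ⊗ w) = t³ (w ⊗ v)` for the invariant vector `w = v₁⊗v₂ − t⁻¹·v₂⊗v₁`;
i.e. the Kazhdan–Wenzl invariant is `r = t³`, so `r² = q³` (and not `r² = 1`). -/
theorem kazhdanWenzl_invariant (t : ℂ) (ht : t ≠ 0) (ht' : t + t⁻¹ ≠ 0)
    (e : Matrix (Fin 2 × Fin 2) (Fin 2 × Fin 2) ℂ)
    (h00 : e.mulVec (tp (v 0) (v 0)) = 0)
    (h11 : e.mulVec (tp (v 1) (v 1)) = 0)
    (h01 : e.mulVec (tp (v 0) (v 1)) =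
      (t + t⁻¹)⁻¹ • (t • tp (v 0) (v 1) - tp (v 1) (v 0)))
    (h10 : e.mulVec (tp (v 1) (v 0)) =
      (t + t⁻¹)⁻¹ • (-(tp (v 0) (v 1)) + t⁻¹ • tp (v 1) (v 0)))
    (q : ℂ) (hq : q = t ^ 2)
    (g : Matrix (Fin 2 × Fin 2) (Fin 2 × Fin 2) ℂ)
    (hg : g = q • (1 : Matrix (Fin 2 × Fin 2) (Fin 2 × Fin 2) ℂ) - (1 + q) • e)
    (w : Fin 2 × Fin 2 → ℂ) (hw : w = tp (v 0) (v 1) - t⁻¹ • tp (v 1) (v 0)) :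
    ∀ u : Fin 2 → ℂ, (amp23 g * amp12 g).mulVec (vtp u w) = t ^ 3 • tpv w u := by
  have hsingle : ∀ i j : Fin 2, tp (v i) (v j) = Pi.single (i, j) 1 := by
    intro i j
    funext p
    rcases p with ⟨k, l⟩
    by_cases h1 : k = i <;> by_cases h2 : l = j <;>
      simp [tp, v, Pi.single_apply, Prod.ext_iff, h1, h2]
  have h00' : ∀ a, e a (0, 0) = 0 := by
    intro a
    have h := h00
    rw [hsingle 0 0] at h
    simpa using congrFun h a
  have h11' : ∀ a, e a (1, 1) = 0 := by
    intro a
    have h := h11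
    rw [hsingle 1 1] at h
    simpa using congrFun h a
  have h01' : ∀ a, e a (0, 1) =
      (t + t⁻¹)⁻¹ * (t * (Pi.single (0, 1) 1 : Fin 2 × Fin 2 → ℂ) a
        - (Pi.single (1, 0) 1 : Fin 2 × Fin 2 → ℂ) a) := by
    intro a
    have h := h01
    rw [hsingle 0 1, hsingle 1 0] at h
    simpa [Pi.smul_apply, smul_eq_mul] using congrFun h a
  have h10' : ∀ a, e a (1, 0) =
      (t + t⁻¹)⁻¹ * (-((Pi.single (0, 1) 1 : Fin 2 × Fin 2 → ℂ) a)
        + t⁻¹ * (Pi.single (1, 0) 1 : Fin 2 × Fin 2 → ℂ) a) := by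
    intro a
    have h := h10
    rw [hsingle 0 1, hsingle 1 0] at h
    simpa [Pi.smul_apply, smul_eq_mul] using congrFun h a
  have hn1 : (1 : ℂ) + t ^ 2 ≠ 0 := by
    have h := mul_ne_zero ht ht'
    rw [mul_add, mul_inv_cancel₀ ht] at h
    intro hc
    apply h
    linear_combination hc
  have hn1' : t * t + 1 ≠ 0 := by
    intro hc
    apply hn1
    linear_combination hc
  have hn2 : t + t ^ 3 ≠ 0 := by
    have h := mul_ne_zero ht hn1
    intro hc
    apply h
    linear_combination hc
  have hG : g = Matrix.of (fun a b : Fin 2 × Fin 2 =>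
      (if a = (0, 0) ∧ b = (0, 0) then t ^ 2 else 0)
        + (if a = (1, 1) ∧ b = (1, 1) then t ^ 2 else 0)
        + (if a = (0, 1) ∧ b = (1, 0) then t else 0)
        + (if a = (1, 0) ∧ b = (0, 1) then t else 0)
        + (if a = (1, 0) ∧ b = (1, 0) then t ^ 2 - 1 else 0)) := by
    subst hg hq
    funext a b
    rcases a with ⟨a1, a2⟩
    rcases b with ⟨b1, b2⟩
    fin_cases b1 <;> fin_cases b2 <;> fin_cases a1 <;> fin_cases a2 <;>
      norm_num [Matrix.sub_apply, Matrix.smul_apply, Matrix.one_apply,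
        Matrix.of_apply, h00', h01', h10', h11', Pi.single_apply,
        Prod.mk.injEq, Fin.ext_iff, -Prod.mk_zero_zero, -Prod.mk_one_one]
    all_goals try ring
    all_goals try field_simp
    all_goals try ring
    all_goals first
      | linear_combination mul_inv_cancel₀ hn1
      | linear_combination (-t ^ 2) * mul_inv_cancel₀ hn1
  subst hG hw
  intro u
  funext p
  obtain ⟨p1, p2, p3⟩ := p
  fin_cases p1 <;> fin_cases p2 <;> fin_cases p3 <;>
  · simp only [Matrix.mulVec, Matrix.mul_apply, dotProduct,
      Fintype.sum_prod_type, Fin.sum_univ_succ, Finset.sum_empty,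
      Fin.sum_univ_zero, amp12, amp23, vtp, tpv, tp, v, Matrix.of_apply,
      Pi.single_apply, Pi.smul_apply, Pi.sub_apply, smul_eq_mul,
      Prod.mk.injEq, Fin.ext_iff]
    norm_num
    try field_simp
    try ring
    try tauto
end

section
/- Let B be a finite-dimensional semisimple ℂ-algebra, A a ℂ-algebra, and φ : A → B an algebra homomorphism. Suppose that every simple left B-module, regarded as an A-module via φ, is a simple A-module, and that any two non-isomorphic simple left B-modules remain non-isomorphic as A-modules via φ. Then φ is surjective. -/
open LinearMap

section Aux

variable {A B : Type} [Ring A] [Algebra ℂ A] [Ring B] [Algebra ℂ B] [FiniteDimensional ℂ B]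

/-- Schur-type core lemma: an additive map between simple `B`-modules that commutes with the
`A`-action via `φ` commutes with the full `B`-action. -/
lemma core_equivariant (φ : A →ₐ[ℂ] B)
    (hsimple : ∀ (M : Type) [AddCommGroup M] [Module B M], IsSimpleModule B M →
      letI : Module A M := Module.compHom M (φ : A →+* B)
      IsSimpleModule A M)
    (hdistinct : ∀ (M N : Type) [AddCommGroup M] [AddCommGroup N] [Module B M]
      [Module B N], IsSimpleModule B M → IsSimpleModule B N →
      ¬Nonempty (M ≃ₗ[B] N) →
      letI : Module A M := Module.compHom M (φ : A →+* B)
      letI : Module A N := Module.compHom N (φ : A →+* B)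
      ¬Nonempty (M ≃ₗ[A] N))
    (M N : Type) [AddCommGroup M] [AddCommGroup N] [Module B M] [Module B N]
    (hM : IsSimpleModule B M) (hN : IsSimpleModule B N)
    (q : M →+ N) (hq : ∀ (a : A) (x : M), q (φ a • x) = φ a • q x)
    (b : B) (x : M) : q (b • x) = b • q x := by
  letI : Module A M := Module.compHom M (φ : A →+* B)
  letI : Module A N := Module.compHom N (φ : A →+* B)
  haveI : IsSimpleModule A M := hsimple M hM
  haveI : IsSimpleModule A N := hsimple N hN
  have hsmulM : ∀ (a : A) (y : M), a • y = φ a • y := fun _ _ => rfl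
  have hsmulN : ∀ (a : A) (y : N), a • y = φ a • y := fun _ _ => rfl
  let Q : M →ₗ[A] N :=
    { toFun := q, map_add' := q.map_add,
      map_smul' := fun a y => by
        simp only [RingHom.id_apply]; rw [hsmulM, hsmulN]; exact hq a y }
  by_cases hiso : Nonempty (M ≃ₗ[B] N)
  · obtain ⟨e⟩ := hiso
    letI : Module ℂ M := Module.compHom M (algebraMap ℂ B)
    have hsmulC : ∀ (c : ℂ) (y : M), c • y = algebraMap ℂ B c • y := fun _ _ => rfl
    let f : M →ₗ[A] M :=
      { toFun := fun y => e.symm (q y),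
        map_add' := fun y z => by
          show e.symm (q (y + z)) = e.symm (q y) + e.symm (q z)
          rw [q.map_add, map_add],
        map_smul' := fun a y => by
          show e.symm (q (a • y)) = a • e.symm (q y)
          rw [hsmulM, hsmulM, hq, map_smul] }
    haveI : Nontrivial M := IsSimpleModule.nontrivial B M
    haveI : FiniteDimensional ℂ M := by
      obtain ⟨z, hz⟩ := exists_ne (0 : M)
      let L : B →ₗ[ℂ] M :=
        { toFun := fun b => b • z,
          map_add' := fun b b' => add_smul b b' z,
          map_smul' := fun c b => by
            simp only [RingHom.id_apply]
            rw [hsmulC, Algebra.smul_def, mul_smul] }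
      have hsurj : Function.Surjective L := by
        intro y
        obtain ⟨b, hb⟩ := IsSimpleModule.toSpanSingleton_surjective B hz y
        exact ⟨b, by simpa [L] using hb⟩
      exact Module.Finite.of_surjective L hsurj
    let fC : Module.End ℂ M :=
      { toFun := fun y => f y,
        map_add' := f.map_add,
        map_smul' := fun c y => by
          show f (c • y) = c • f y
          rw [hsmulC c y, hsmulC c (f y), ← φ.commutes c]
          exact f.map_smul (algebraMap ℂ A c) y }
    obtain ⟨c, hc⟩ := Module.End.exists_eigenvalue fC
    obtain ⟨v, hv⟩ := hc.exists_hasEigenvector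
    let g : M →ₗ[A] M :=
      { toFun := fun y => f y - algebraMap ℂ B c • y,
        map_add' := fun y z => by
          show f (y + z) - algebraMap ℂ B c • (y + z) = _ + _
          rw [f.map_add, smul_add]; abel_nf,
        map_smul' := fun a y => by
          show f (a • y) - algebraMap ℂ B c • (a • y) = a • (f y - algebraMap ℂ B c • y)
          have h1 : f (φ a • y) = φ a • f y := f.map_smul a y
          rw [hsmulM a y, hsmulM a (f y - algebraMap ℂ B c • y), h1, smul_sub]
          congr 1
          rw [← mul_smul, ← mul_smul, Algebra.commutes] }
    have hv0 : g v = 0 := by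
      show f v - algebraMap ℂ B c • v = 0
      rw [sub_eq_zero]
      exact hv.apply_eq_smul
    have hker : LinearMap.ker g = ⊤ := by
      rcases eq_bot_or_eq_top (LinearMap.ker g) with h | h
      · exfalso
        apply hv.right
        have : v ∈ LinearMap.ker g := hv0
        rw [h] at this
        simpa using this
      · exact h
    have hf : ∀ y : M, f y = algebraMap ℂ B c • y := by
      intro y
      have hy : g y = 0 := by
        have : y ∈ LinearMap.ker g := by rw [hker]; trivial
        simpa using this
      have : f y - algebraMap ℂ B c • y = 0 := hy
      rwa [sub_eq_zero] at this
    have hqe : ∀ y : M, q y = e (f y) := fun y => (e.apply_symm_apply (q y)).symm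
    rw [hqe, hqe, hf, hf]
    simp only [map_smul, ← mul_smul]
    rw [Algebra.commutes]
  · have hQ : Q = 0 := by
      by_contra h
      exact hdistinct M N hM hN hiso ⟨LinearEquiv.ofBijective Q (Q.bijective_of_ne_zero h)⟩
    have hq0 : ∀ y : M, q y = 0 := fun y => DFunLike.congr_fun hQ y
    rw [hq0, hq0, smul_zero]

end Aux

/-- If `B` is a finite-dimensional semisimple ℂ-algebra and `φ : A → B` an algebra
homomorphism such that every simple `B`-module stays simple as an `A`-module via `φ`
and non-isomorphic simple `B`-modules stay non-isomorphic as `A`-modules via `φ`,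
then `φ` is surjective. -/
theorem surjective_of_simple_preserving {A B : Type} [Ring A] [Algebra ℂ A]
    [Ring B] [Algebra ℂ B] [FiniteDimensional ℂ B] [IsSemisimpleRing B]
    (φ : A →ₐ[ℂ] B)
    (hsimple : ∀ (M : Type) [AddCommGroup M] [Module B M], IsSimpleModule B M →
      letI : Module A M := Module.compHom M (φ : A →+* B)
      IsSimpleModule A M)
    (hdistinct : ∀ (M N : Type) [AddCommGroup M] [AddCommGroup N] [Module B M]
      [Module B N], IsSimpleModule B M → IsSimpleModule B N →
      ¬Nonempty (M ≃ₗ[B] N) →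
      letI : Module A M := Module.compHom M (φ : A →+* B)
      letI : Module A N := Module.compHom N (φ : A →+* B)
      ¬Nonempty (M ≃ₗ[A] N)) :
    Function.Surjective φ := by
  classical
  letI : Module A B := Module.compHom B (φ : A →+* B)
  have hsmul : ∀ (a : A) (x : B), a • x = φ a * x := fun _ _ => rfl
  haveI : IsScalarTower A B B := ⟨fun a b c => mul_assoc (φ a) b c⟩
  -- decomposition of B into simple B-submodules
  obtain ⟨s, hind, htop, hsimp⟩ := IsSemisimpleModule.exists_sSupIndep_sSup_simples_eq_top B B
  let p : s → Submodule B B := fun i => (i : Submodule B B)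
  haveI hpS : ∀ i : s, IsSimpleModule B (p i) := fun i => hsimp i i.2
  have hIsup : iSup p = ⊤ := by rw [← sSup_eq_iSup' s]; exact htop
  have hInd : iSupIndep p := (sSupIndep_iff s).mp hind
  have hInt := DirectSum.isInternal_submodule_of_iSupIndep_of_iSup_eq_top hInd hIsup
  let E := LinearEquiv.ofBijective (DirectSum.coeLinearMap p) hInt
  let proj : ∀ i : s, B →ₗ[B] p i := fun i =>
    (DirectSum.component B s (fun j => p j) i).comp E.symm.toLinearMap
  have hsep : ∀ y z : B, (∀ i, proj i y = proj i z) → y = z := by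
    intro y z h
    exact E.symm.injective (DFinsupp.ext fun i => h i)
  -- every A-linear endomorphism of B commutes with left multiplication
  have hkey : ∀ (f : B →ₗ[A] B) (b x : B), f (b * x) = b * f x := by
    intro f b x
    let U : Submodule B B :=
      { carrier := {y | ∀ b', f (b' * y) = b' * f y}
        add_mem' := by
          intro y z hy hz b'
          rw [mul_add, map_add, hy b', hz b', map_add, mul_add]
        zero_mem' := by intro b'; simp
        smul_mem' := by
          intro b'' y hy b'
          rw [smul_eq_mul, ← mul_assoc, hy (b' * b''), hy b'', mul_assoc] }
    have hU : ∀ y : B, y ∈ U := by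
      intro y
      have hle : (⊤ : Submodule B B) ≤ U := by
        rw [← htop]
        refine sSup_le fun m hm => ?_
        intro z hz
        show ∀ b', f (b' * z) = b' * f z
        intro b'
        haveI hmS : IsSimpleModule B m := hsimp m hm
        apply hsep
        intro i
        let qi : m →+ p i :=
          (proj i).toAddMonoidHom.comp (f.toAddMonoidHom.comp m.subtype.toAddMonoidHom)
        have hqi : ∀ (a : A) (w : m), qi (φ a • w) = φ a • qi w := by
          intro a w
          show proj i (f ((φ a • w : m) : B)) = φ a • proj i (f (w : B))
          have h1 : ((φ a • w : m) : B) = φ a • (w : B) := rfl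
          have h2 : f (φ a • (w : B)) = φ a • f (w : B) := f.map_smul a (w : B)
          rw [h1, h2, map_smul]
        have hc := core_equivariant φ hsimple hdistinct m (p i) hmS (hpS i) qi hqi b' ⟨z, hz⟩
        have hL : qi (b' • (⟨z, hz⟩ : m)) = proj i (f (b' * z)) := rfl
        have hR : b' • qi (⟨z, hz⟩ : m) = proj i (b' * f z) := by
          show b' • proj i (f z) = proj i (b' * f z)
          rw [show b' * f z = b' • f z from rfl, map_smul]
        rw [hL, hR] at hc
        exact hc
      exact hle trivial
    exact hU x b
  -- B is a semisimple A-module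
  haveI : IsSemisimpleModule A B := by
    refine IsSemisimpleModule.of_sSup_simples_eq_top ?_
    rw [eq_top_iff]
    intro x _
    have hx : x ∈ ⨆ i, p i := by rw [hIsup]; trivial
    refine Submodule.iSup_induction p
      (motive := fun y => y ∈ sSup {q : Submodule A B | IsSimpleModule A q}) hx ?_ ?_ ?_
    · intro i y hy
      have hmem : (p i).restrictScalars A ∈ {q : Submodule A B | IsSimpleModule A q} :=
        hsimple (p i) (hpS i)
      exact Submodule.mem_sSup_of_mem hmem hy
    · exact zero_mem _
    · intro y z hy hz; exact add_mem hy hz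
  -- conclude
  intro b
  obtain ⟨T', hT'⟩ := exists_isCompl (Submodule.span A {(1 : B)})
  let π : B →ₗ[A] B :=
    T'.subtype.comp (Submodule.linearProjOfIsCompl T' (Submodule.span A {(1 : B)}) hT'.symm)
  have hπ1 : π 1 = 0 := by
    have h1 : (1 : B) ∈ Submodule.span A {(1 : B)} := Submodule.mem_span_singleton_self 1
    show (Submodule.projectionOnto T' (Submodule.span A {(1 : B)}) hT'.symm 1 : B) = 0
    rw [Submodule.projectionOnto_apply_of_mem_right hT'.symm h1, Submodule.coe_zero]
  have hπ0 : ∀ y, π y = 0 := by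
    intro y
    have h := hkey π y 1
    rwa [mul_one, hπ1, mul_zero] at h
  have hT'bot : T' = ⊥ := by
    rw [eq_bot_iff]
    intro y hy
    have h1 : π y = y := by
      show (Submodule.projectionOnto T' (Submodule.span A {(1 : B)}) hT'.symm y : B) = y
      rw [Submodule.projectionOnto_apply_of_mem_left hT'.symm hy]
    rw [hπ0 y] at h1
    simp [← h1]
  have hTtop : Submodule.span A {(1 : B)} = ⊤ := by
    rw [hT'bot] at hT'
    simpa using hT'.sup_eq_top
  have hb : b ∈ Submodule.span A {(1 : B)} := by rw [hTtop]; trivial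
  obtain ⟨a, ha⟩ := Submodule.mem_span_singleton.mp hb
  exact ⟨a, by rw [hsmul, mul_one] at ha; exact ha⟩
end

section
/- Let V be a finite-dimensional complex vector space with an internal direct sum decomposition V = V₁ ⊕ V₂, let A ⊆ End_ℂ(V) be a unital subalgebra preserving V₁ and V₂ such that V₁ and V₂ are simple A-modules which are not isomorphic to each other, and let B ⊆ End_ℂ(V) be a unital subalgebra containing A. If there exist b ∈ B and v ∈ V₂ such that the V₁-component of b(v) (with respect to the decomposition V = V₁ ⊕ V₂) is nonzero, then the centralizer of B in End_ℂ(V) consists exactly of the scalar multiples of the identity: { x ∈ End_ℂ(V) : x∘b' = b'∘x for all b' ∈ B } = ℂ·id_V. -/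
lemma schur_aux {V : Type} [AddCommGroup V] [Module ℂ V]
    (P Q : Submodule ℂ V) (A : Subalgebra ℂ (Module.End ℂ V))
    (hP : ∀ a ∈ A, ∀ u ∈ P, a u ∈ P)
    (hPsimple : ∀ W : Submodule ℂ V, W ≤ P → (∀ a ∈ A, ∀ u ∈ W, a u ∈ W) →
      W = ⊥ ∨ W = P)
    (hQsimple : ∀ W : Submodule ℂ V, W ≤ Q → (∀ a ∈ A, ∀ u ∈ W, a u ∈ W) →
      W = ⊥ ∨ W = Q)
    (f : P →ₗ[ℂ] Q)
    (hf : ∀ a ∈ A, ∀ u : P, ∀ h : a (u : V) ∈ P, (f ⟨a u, h⟩ : V) = a (f u)) :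
    f = 0 ∨ Function.Bijective f := by
  by_cases hf0 : f = 0
  · exact Or.inl hf0
  right
  have hkerinv : ∀ a ∈ A, ∀ u ∈ (LinearMap.ker f).map P.subtype,
      a u ∈ (LinearMap.ker f).map P.subtype := by
    intro a ha u hu
    obtain ⟨w, hw, rfl⟩ := hu
    refine ⟨⟨a w, hP a ha _ w.2⟩, ?_, rfl⟩
    simp only [SetLike.mem_coe, LinearMap.mem_ker] at hw ⊢
    have h1 := hf a ha w (hP a ha _ w.2)
    rw [hw] at h1
    simp only [ZeroMemClass.coe_zero, map_zero] at h1
    exact Subtype.ext h1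
  have hker : (LinearMap.ker f).map P.subtype = ⊥ := by
    rcases hPsimple _ (Submodule.map_subtype_le _ _) hkerinv with h | h
    · exact h
    · exfalso; apply hf0
      ext u
      have hmem : (u : V) ∈ (LinearMap.ker f).map P.subtype := by rw [h]; exact u.2
      obtain ⟨w, hw, hwu⟩ := hmem
      have hwu' : w = u := Subtype.ext hwu
      subst hwu'
      simp only [SetLike.mem_coe, LinearMap.mem_ker] at hw
      simp [hw]
  have hinj : Function.Injective f := by
    rw [← LinearMap.ker_eq_bot, eq_bot_iff]
    intro w hw
    have hmem : (w : V) ∈ (LinearMap.ker f).map P.subtype := ⟨w, hw, rfl⟩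
    rw [hker, Submodule.mem_bot] at hmem
    simpa using Subtype.ext hmem
  have hrinv : ∀ a ∈ A, ∀ u ∈ (LinearMap.range f).map Q.subtype,
      a u ∈ (LinearMap.range f).map Q.subtype := by
    intro a ha u hu
    obtain ⟨w, hw, rfl⟩ := hu
    obtain ⟨v, rfl⟩ := hw
    exact ⟨f ⟨a v, hP a ha _ v.2⟩, ⟨_, rfl⟩, hf a ha v (hP a ha _ v.2)⟩
  have hrange : (LinearMap.range f).map Q.subtype = Q := by
    rcases hQsimple _ (Submodule.map_subtype_le _ _) hrinv with h | h
    · exfalso; apply hf0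
      ext u
      have hmem : ((f u : V)) ∈ (LinearMap.range f).map Q.subtype := ⟨f u, ⟨u, rfl⟩, rfl⟩
      rw [h, Submodule.mem_bot] at hmem
      simpa using Subtype.ext hmem
    · exact h
  have hsurj : Function.Surjective f := by
    intro q
    have hmem : (q : V) ∈ (LinearMap.range f).map Q.subtype := by rw [hrange]; exact q.2
    obtain ⟨w, ⟨v, rfl⟩, hw⟩ := hmem
    exact ⟨v, Subtype.ext hw⟩
  exact ⟨hinj, hsurj⟩

lemma schur_scalar {V : Type} [AddCommGroup V] [Module ℂ V] [FiniteDimensional ℂ V]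
    (P : Submodule ℂ V) (A : Subalgebra ℂ (Module.End ℂ V))
    (hPne : P ≠ ⊥)
    (hP : ∀ a ∈ A, ∀ u ∈ P, a u ∈ P)
    (hPsimple : ∀ W : Submodule ℂ V, W ≤ P → (∀ a ∈ A, ∀ u ∈ W, a u ∈ W) →
      W = ⊥ ∨ W = P)
    (x : Module.End ℂ V)
    (hxP : ∀ u ∈ P, x u ∈ P)
    (hxA : ∀ a ∈ A, x * a = a * x) :
    ∃ c : ℂ, ∀ u ∈ P, x u = c • u := by
  haveI : Nontrivial P := Submodule.nontrivial_iff_ne_bot.mpr hPne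
  obtain ⟨c, hc⟩ := Module.End.exists_eigenvalue (LinearMap.restrict x hxP)
  obtain ⟨u, hu⟩ := hc.exists_hasEigenvector
  refine ⟨c, ?_⟩
  set W : Submodule ℂ V := P ⊓ LinearMap.ker (x - c • (1 : Module.End ℂ V)) with hWdef
  have hWP : W ≤ P := inf_le_left
  have hWinv : ∀ a ∈ A, ∀ w ∈ W, a w ∈ W := by
    intro a ha w hw
    rw [Submodule.mem_inf] at hw ⊢
    obtain ⟨hw1, hw2⟩ := hw
    rw [LinearMap.mem_ker] at hw2
    refine ⟨hP a ha w hw1, ?_⟩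
    rw [LinearMap.mem_ker]
    have hw2' : x w = c • w := by
      have := sub_eq_zero.mp (by simpa using hw2)
      simpa using this
    have hcomm := congrFun (congrArg DFunLike.coe (hxA a ha)) w
    simp only [Module.End.mul_apply] at hcomm
    simp only [LinearMap.sub_apply, LinearMap.smul_apply, Module.End.one_apply]
    rw [hcomm, hw2', map_smul, sub_self]
  have humem : (u : V) ∈ W := by
    rw [Submodule.mem_inf]
    refine ⟨u.2, ?_⟩
    rw [LinearMap.mem_ker]
    have hxu : x (u : V) = c • (u : V) := by
      have := congrArg Subtype.val hu.apply_eq_smul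
      simpa [LinearMap.restrict_apply] using this
    simp only [LinearMap.sub_apply, LinearMap.smul_apply, Module.End.one_apply]
    rw [hxu, sub_self]
  have hWne : W ≠ ⊥ := by
    intro hbot
    rw [hbot, Submodule.mem_bot] at humem
    exact hu.right (Subtype.ext humem)
  have hWP' : W = P := (hPsimple W hWP hWinv).resolve_left hWne
  intro v hv
  have hvW : v ∈ W := hWP' ▸ hv
  rw [Submodule.mem_inf] at hvW
  have h2 := hvW.2
  rw [LinearMap.mem_ker] at h2
  have := sub_eq_zero.mp (by simpa using h2)
  simpa using this



/-- Let `V = V₁ ⊕ V₂` be a finite-dimensional complex vector space, `A ⊆ End(V)` a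
unital subalgebra preserving `V₁` and `V₂` such that `V₁`, `V₂` are inequivalent
simple `A`-modules, and let `B ⊇ A` be a unital subalgebra of `End(V)`. If some
`b ∈ B` maps a vector of `V₂` to a vector with nonzero `V₁`-component, then the
centralizer of `B` in `End(V)` reduces to the scalars `ℂ·id`. -/
theorem centralizer_eq_scalars {V : Type} [AddCommGroup V] [Module ℂ V]
    [FiniteDimensional ℂ V]
    (V₁ V₂ : Submodule ℂ V) (hcompl : IsCompl V₁ V₂)
    (A B : Subalgebra ℂ (Module.End ℂ V)) (hAB : A ≤ B)
    (hA1 : ∀ a ∈ A, ∀ x ∈ V₁, a x ∈ V₁)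
    (hA2 : ∀ a ∈ A, ∀ x ∈ V₂, a x ∈ V₂)
    (h1ne : V₁ ≠ ⊥)
    (h2ne : V₂ ≠ ⊥)
    (h1simple : ∀ W : Submodule ℂ V, W ≤ V₁ → (∀ a ∈ A, ∀ x ∈ W, a x ∈ W) →
      W = ⊥ ∨ W = V₁)
    (h2simple : ∀ W : Submodule ℂ V, W ≤ V₂ → (∀ a ∈ A, ∀ x ∈ W, a x ∈ W) →
      W = ⊥ ∨ W = V₂)
    (hnoniso : ¬∃ g : V₁ ≃ₗ[ℂ] V₂, ∀ a : A, ∀ x : V₁,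
      (g ⟨(a : Module.End ℂ V) x, hA1 a a.2 x x.2⟩ : V) = (a : Module.End ℂ V) (g x))
    (hmix : ∃ b ∈ B, ∃ x ∈ V₂, (V₁.linearProjOfIsCompl V₂ hcompl) (b x) ≠ 0) :
    {x : Module.End ℂ V | ∀ b' ∈ B, x * b' = b' * x} =
      {x : Module.End ℂ V | ∃ c : ℂ, x = c • (1 : Module.End ℂ V)} := by
  ext x
  simp only [Set.mem_setOf_eq]
  constructor
  · intro hx
    have hxA : ∀ a ∈ A, x * a = a * x := fun a ha => hx a (hAB ha)
    have hcommapp : ∀ a ∈ A, ∀ w : V, x (a w) = a (x w) := by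
      intro a ha w
      have := congrFun (congrArg DFunLike.coe (hxA a ha)) w
      simpa using this
    set π₁ := V₁.linearProjOfIsCompl V₂ hcompl with hπ₁def
    set π₂ := V₂.linearProjOfIsCompl V₁ hcompl.symm with hπ₂def
    have hsum : ∀ w : V, (π₁ w : V) + (π₂ w : V) = w := fun w =>
      Submodule.projection_add_projection_eq_self hcompl w
    have hproj : ∀ a ∈ A, ∀ w : V,
        (π₁ (a w) : V) = a (π₁ w) ∧ (π₂ (a w) : V) = a (π₂ w) := by
      intro a ha w
      obtain ⟨p, hp⟩ : ∃ p : V₁, (p : V) = (π₁ w : V) := ⟨π₁ w, rfl⟩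
      obtain ⟨q, hq⟩ : ∃ q : V₂, (q : V) = (π₂ w : V) := ⟨π₂ w, rfl⟩
      have hw : (p : V) + (q : V) = w := by rw [hp, hq]; exact hsum w
      have haw : a w = a (p : V) + a (q : V) := by rw [← map_add, hw]
      have e1 : π₁ (a (q : V)) = 0 :=
        Submodule.projectionOnto_apply_of_mem_right hcompl (hA2 a ha _ q.2)
      have e2 : (π₁ (a (p : V)) : V) = a (p : V) := congrArg Subtype.val
        (Submodule.linearProjOfIsCompl_apply_left hcompl ⟨a (p : V), hA1 a ha _ p.2⟩)
      have e3 : π₂ (a (p : V)) = 0 :=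
        Submodule.projectionOnto_apply_of_mem_right hcompl.symm (hA1 a ha _ p.2)
      have e4 : (π₂ (a (q : V)) : V) = a (q : V) := congrArg Subtype.val
        (Submodule.linearProjOfIsCompl_apply_left hcompl.symm ⟨a (q : V), hA2 a ha _ q.2⟩)
      constructor
      · rw [haw, map_add, Submodule.coe_add, e1, e2, ← hp]
        simp
      · rw [haw, map_add, Submodule.coe_add, e3, e4, ← hq]
        simp
    -- claim1 : x preserves V₁
    have claim1 : ∀ u ∈ V₁, x u ∈ V₁ := by
      set f : V₁ →ₗ[ℂ] V₂ := π₂ ∘ₗ (x ∘ₗ V₁.subtype) with hfdef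
      have hfe : ∀ a ∈ A, ∀ u : V₁, ∀ h : a (u : V) ∈ V₁,
          (f ⟨a (u : V), h⟩ : V) = a ((f u : V)) := by
        intro a ha u h
        show (π₂ (x (a (u : V))) : V) = a ((π₂ (x (u : V)) : V))
        rw [hcommapp a ha, (hproj a ha (x (u : V))).2]
      rcases schur_aux V₁ V₂ A hA1 h1simple h2simple f hfe with h0 | hbij
      · intro u hu
        have h2z : (π₂ (x u) : V) = 0 := by
          have := LinearMap.ext_iff.mp h0 ⟨u, hu⟩
          have h2 : f ⟨u, hu⟩ = 0 := this
          have : (f ⟨u, hu⟩ : V) = 0 := by rw [h2]; rfl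
          simpa [hfdef] using this
        have := hsum (x u)
        rw [h2z, add_zero] at this
        rw [← this]
        exact (π₁ (x u)).2
      · exfalso
        refine hnoniso ⟨LinearEquiv.ofBijective f hbij, ?_⟩
        intro a u
        have := hfe a a.2 u (hA1 a a.2 u u.2)
        simpa [LinearEquiv.ofBijective_apply] using this
    -- claim2 : x preserves V₂
    have claim2 : ∀ u ∈ V₂, x u ∈ V₂ := by
      set f : V₂ →ₗ[ℂ] V₁ := π₁ ∘ₗ (x ∘ₗ V₂.subtype) with hfdef
      have hfe : ∀ a ∈ A, ∀ u : V₂, ∀ h : a (u : V) ∈ V₂,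
          (f ⟨a (u : V), h⟩ : V) = a ((f u : V)) := by
        intro a ha u h
        show (π₁ (x (a (u : V))) : V) = a ((π₁ (x (u : V)) : V))
        rw [hcommapp a ha, (hproj a ha (x (u : V))).1]
      rcases schur_aux V₂ V₁ A hA2 h2simple h1simple f hfe with h0 | hbij
      · intro u hu
        have h1z : (π₁ (x u) : V) = 0 := by
          have := LinearMap.ext_iff.mp h0 ⟨u, hu⟩
          have h2 : f ⟨u, hu⟩ = 0 := this
          have : (f ⟨u, hu⟩ : V) = 0 := by rw [h2]; rfl
          simpa [hfdef] using this
        have := hsum (x u)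
        rw [h1z, zero_add] at this
        rw [← this]
        exact (π₂ (x u)).2
      · exfalso
        set e := LinearEquiv.ofBijective f hbij with hedef
        refine hnoniso ⟨e.symm, ?_⟩
        intro a u
        have hkey : e.symm ⟨(a : Module.End ℂ V) u, hA1 a a.2 u u.2⟩
            = ⟨(a : Module.End ℂ V) ((e.symm u : V)), hA2 a a.2 _ (e.symm u).2⟩ := by
          apply hbij.1
          have h1 : f (e.symm ⟨(a : Module.End ℂ V) u, hA1 a a.2 u u.2⟩)
              = ⟨(a : Module.End ℂ V) u, hA1 a a.2 u u.2⟩ := by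
            have := e.apply_symm_apply ⟨(a : Module.End ℂ V) u, hA1 a a.2 u u.2⟩
            simpa [hedef, LinearEquiv.ofBijective_apply] using this
          have h2 : (f ⟨(a : Module.End ℂ V) ((e.symm u : V)), hA2 a a.2 _ (e.symm u).2⟩ : V)
              = (a : Module.End ℂ V) ((f (e.symm u) : V)) :=
            hfe a a.2 (e.symm u) _
          have h3 : f (e.symm u) = u := by
            have := e.apply_symm_apply u
            simpa [hedef, LinearEquiv.ofBijective_apply] using this
          rw [h1]
          apply Subtype.ext
          rw [h2, h3]
        rw [hkey]
    -- Schur scalars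
    obtain ⟨c₁, hc₁⟩ := schur_scalar V₁ A h1ne hA1 h1simple x claim1 hxA
    obtain ⟨c₂, hc₂⟩ := schur_scalar V₂ A h2ne hA2 h2simple x claim2 hxA
    obtain ⟨b, hbB, v, hv, hbv⟩ := hmix
    set w := b v with hwdef
    have hu₁ : (π₁ w : V) ≠ 0 := by
      intro h
      exact hbv (Subtype.ext h)
    have hxbv : x w = c₂ • w := by
      have hbc := congrFun (congrArg DFunLike.coe (hx b hbB)) v
      simp only [Module.End.mul_apply] at hbc
      rw [hwdef, hbc, hc₂ v hv, map_smul]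
    have hdecomp : x w = c₁ • (π₁ w : V) + c₂ • (π₂ w : V) := by
      conv_lhs => rw [← hsum w]
      rw [map_add, hc₁ _ (π₁ w).2, hc₂ _ (π₂ w).2]
    have hceq : c₁ = c₂ := by
      have h1 : c₁ • (π₁ w : V) + c₂ • (π₂ w : V) = c₂ • (π₁ w : V) + c₂ • (π₂ w : V) := by
        rw [← hdecomp, hxbv]
        conv_lhs => rw [← hsum w]
        rw [smul_add]
      have h2 : c₁ • (π₁ w : V) = c₂ • (π₁ w : V) := by
        exact add_right_cancel h1
      have h3 : (c₁ - c₂) • (π₁ w : V) = 0 := by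
        rw [sub_smul, h2, sub_self]
      rcases smul_eq_zero.mp h3 with h | h
      · exact sub_eq_zero.mp h
      · exact absurd h hu₁
    refine ⟨c₂, ?_⟩
    ext z
    have : x z = x (π₁ z : V) + x (π₂ z : V) := by
      conv_lhs => rw [← hsum z]
      rw [map_add]
    rw [LinearMap.smul_apply, Module.End.one_apply, this,
      hc₁ _ (π₁ z).2, hc₂ _ (π₂ z).2, hceq, ← smul_add, hsum]
  · rintro ⟨c, rfl⟩ b' hb'
    ext z
    simp [mul_smul_comm, smul_mul_assoc]
end
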